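/- arXiv:1009.3260 — 3 statements merged into one kernel-verified Lean document; each statement's English description precedes it below -/
import Mathlib

section
/- Let B and Q be topological spaces and let P be a compact Hausdorff space. Regard B×P and B×Q as fibrewise spaces over B via the first projections, so that the fibre of B×P over b is {b}×P. Then the natural bijection Map_B(B×P, B×Q) → B × C(P,Q), sending a pair (b, f) (with f : {b}×P → {b}×Q continuous) to (b, g) where g(p) is the second coordinate of f(b,p), is a homeomorphism, where C(P,Q) carries the compact-open topology and B × C(P,Q) the product topology. -/
/-- The fibrewise mapping space `Map_B(X,Y)` of a pair of fibrewise spaces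
`p : X → B`, `q : Y → B`: pairs `(b, f)` with `f : X_b → Y_b` continuous. -/
structure FibreMap {B X Y : Type} [TopologicalSpace X] [TopologicalSpace Y]
    (p : X → B) (q : Y → B) where
  base : B
  map : C({x : X // p x = base}, {y : Y // q y = base})

/-- `K` is a fibrewise compact subspace of `X_W` over `W`: the restriction of the
projection to `K` is a closed map `K → W` with compact fibres. -/
def FibrewiseCompactOn {B X : Type} [TopologicalSpace B] [TopologicalSpace X]
    (p : X → B) (K : Set X) (W : Set B) : Prop :=
  ∃ h : ∀ x ∈ K, p x ∈ W,
    IsClosedMap (fun k : K => (⟨p k.1, h k.1 k.2⟩ : W)) ∧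
    ∀ b ∈ W, IsCompact (K ∩ p ⁻¹' {b})

/-- The fibrewise compact-open topology on `Map_B(X,Y)`: generated by the sets
`(K, V; W) = {(b,f) : b ∈ W, f(K_b) ⊆ V_b}`, where `W ⊆ B` is open, `K` is a fibrewise
compact subspace of `X_W`, and `V` is an open subspace of `Y_W`. -/
instance fibreMapTopology {B X Y : Type} [TopologicalSpace B] [TopologicalSpace X]
    [TopologicalSpace Y] (p : X → B) (q : Y → B) :
    TopologicalSpace (FibreMap p q) :=
  TopologicalSpace.generateFrom
    {S | ∃ (W : Set B) (K : Set X) (V : Set Y),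
      IsOpen W ∧ FibrewiseCompactOn p K W ∧ IsOpen V ∧ V ⊆ q ⁻¹' W ∧
      S = {m : FibreMap p q | m.base ∈ W ∧
        ∀ (x : X), x ∈ K → ∀ hx : p x = m.base, ((m.map ⟨x, hx⟩ : Y)) ∈ V}}

section Aux

variable {B P Q : Type} [TopologicalSpace B] [TopologicalSpace P] [TopologicalSpace Q]

/-- The empty set is fibrewise compact over any `W`. -/
lemma fwc_empty {X : Type} [TopologicalSpace X] (p : X → B) (W : Set B) :
    FibrewiseCompactOn p (∅ : Set X) W := by
  refine ⟨fun x hx => absurd hx (Set.notMem_empty x), ?_, ?_⟩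
  · intro C _
    have : C = ∅ := Set.eq_empty_of_isEmpty C
    simp [this]
  · intro b _
    simp [isCompact_empty]

/-- `univ ×ˢ K` for `K` compact is fibrewise compact over `univ`. -/
lemma fwc_univ_prod {K : Set P} (hK : IsCompact K) :
    FibrewiseCompactOn (Prod.fst : B × P → B) (Set.univ ×ˢ K) Set.univ := by
  refine ⟨fun x _ => trivial, ?_, ?_⟩
  · have : CompactSpace ↥K := isCompact_iff_compactSpace.1 hK
    have h1 : IsClosedMap
        (fun z : ↥((Set.univ : Set B) ×ˢ K) =>
          ((Homeomorph.Set.prod (Set.univ : Set B) K) z).1) :=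
      isClosedMap_fst_of_compactSpace.comp (Homeomorph.Set.prod _ _).isClosedMap
    exact h1
  · intro b _
    have : (Set.univ ×ˢ K) ∩ (Prod.fst : B × P → B) ⁻¹' {b} = {b} ×ˢ K := by
      ext ⟨x1, x2⟩
      constructor
      · rintro ⟨⟨-, h2⟩, h1⟩
        exact ⟨h1, h2⟩
      · rintro ⟨h1, h2⟩
        exact ⟨⟨trivial, h2⟩, h1⟩
    rw [this]
    exact isCompact_singleton.prod hK

/-- If `K` is fibrewise compact over an open `W` and `A` is open, the set of `b ∈ W`
whose fibre `K_b` lies in `A` is open. -/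
lemma fwc_isOpen_setOf {X : Type} [TopologicalSpace X] {p : X → B} {K : Set X} {W : Set B}
    (hW : IsOpen W) (hK : FibrewiseCompactOn p K W) {A : Set X} (hA : IsOpen A) :
    IsOpen {b | b ∈ W ∧ ∀ x ∈ K, p x = b → x ∈ A} := by
  obtain ⟨hmem, hclosed, -⟩ := hK
  set f : K → W := fun k => (⟨p k.1, hmem k.1 k.2⟩ : W) with hf
  have hC : IsClosed {k : K | k.1 ∉ A} := by
    have : {k : K | k.1 ∉ A} = (Subtype.val : K → X) ⁻¹' Aᶜ := rfl
    rw [this]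
    exact hA.isClosed_compl.preimage continuous_subtype_val
  have hD : IsClosed (f '' {k : K | k.1 ∉ A}) := hclosed _ hC
  obtain ⟨E, hE, hEeq⟩ := isClosed_induced_iff.1 hD
  have key : {b | b ∈ W ∧ ∀ x ∈ K, p x = b → x ∈ A} = W ∩ Eᶜ := by
    ext b
    simp only [Set.mem_setOf_eq, Set.mem_inter_iff, Set.mem_compl_iff]
    constructor
    · rintro ⟨hbW, hb⟩
      refine ⟨hbW, fun hbE => ?_⟩
      have : (⟨b, hbW⟩ : W) ∈ f '' {k : K | k.1 ∉ A} := by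
        rw [← hEeq]; exact hbE
      obtain ⟨k, hk, hfk⟩ := this
      have hpk : p k.1 = b := congrArg Subtype.val hfk
      exact hk (hb k.1 k.2 hpk)
    · rintro ⟨hbW, hbE⟩
      refine ⟨hbW, fun x hxK hpx => ?_⟩
      by_contra hxA
      have : (⟨b, hbW⟩ : W) ∈ f '' {k : K | k.1 ∉ A} :=
        ⟨⟨x, hxK⟩, hxA, Subtype.ext hpx⟩
      rw [← hEeq] at this
      exact hbE this
  rw [key]
  exact hW.inter hE.isOpen_compl

/-- The inverse map `B × C(P,Q) → Map_B(B×P, B×Q)`. -/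
def trivMapInv (z : B × C(P, Q)) :
    FibreMap (Prod.fst : B × P → B) (Prod.fst : B × Q → B) where
  base := z.1
  map := ⟨fun x => ⟨(z.1, z.2 x.1.2), rfl⟩, by
    apply Continuous.subtype_mk
    exact continuous_const.prodMk
      (z.2.continuous.comp (continuous_snd.comp continuous_subtype_val))⟩

lemma continuous_trivMapInv [CompactSpace P] [T2Space P] : Continuous (trivMapInv : B × C(P, Q) → _) := by
  refine continuous_generateFrom_iff.mpr ?_
  rintro S ⟨W, K, V, hW, hK, hV, hVW, rfl⟩
  rw [isOpen_iff_forall_mem_open]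
  rintro ⟨b₀, g₀⟩ hz
  obtain ⟨hb₀W, hz2⟩ := hz
  -- the fibre of K over b₀, as a subset of P
  set F : Set P := {t | (b₀, t) ∈ K} with hF
  have hFcomp : IsCompact F := by
    obtain ⟨-, -, hfib⟩ := hK
    have h1 : IsCompact (K ∩ (Prod.fst : B × P → B) ⁻¹' {b₀}) := hfib b₀ hb₀W
    have : F = Prod.snd '' (K ∩ (Prod.fst : B × P → B) ⁻¹' {b₀}) := by
      ext t
      constructor
      · intro ht; exact ⟨(b₀, t), ⟨ht, rfl⟩, rfl⟩
      · rintro ⟨⟨xb, xp⟩, ⟨hxK, hxb⟩, rfl⟩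
        simp only [Set.mem_preimage, Set.mem_singleton_iff] at hxb
        subst hxb; exact hxK
    rw [this]
    exact h1.image continuous_snd
  -- choose data for each point of F
  have hchoice : ∀ t ∈ F, ∃ (U : Set B) (V' : Set Q) (N : Set P),
      IsOpen U ∧ b₀ ∈ U ∧ IsOpen V' ∧ N ∈ nhds t ∧ IsCompact N ∧
      Set.MapsTo g₀ N V' ∧ U ×ˢ V' ⊆ V := by
    intro t ht
    have hVmem : (b₀, g₀ t) ∈ V := hz2 (b₀, t) ht rfl
    obtain ⟨U, V', hU, hV', hbU, hgV', hsub⟩ := isOpen_prod_iff.1 hV b₀ (g₀ t) hVmem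
    obtain ⟨N, hNn, hNsub, hNc⟩ :=
      local_compact_nhds ((hV'.preimage g₀.continuous).mem_nhds hgV')
    exact ⟨U, V', N, hU, hbU, hV', hNn, hNc, hNsub, hsub⟩
  choose! U V' N hU hbU hV' hNn hNc hmap hsub using hchoice
  obtain ⟨s, hsF, hcover⟩ := hFcomp.elim_nhds_subcover (fun t => interior (N t))
    (fun t ht => interior_mem_nhds.2 (hNn t ht))
  set G : Set P := ⋃ t ∈ s, interior (N t) with hG
  have hGopen : IsOpen G := isOpen_biUnion fun _ _ => isOpen_interior
  -- the open set of base points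
  set W'' : Set B :=
    {b | b ∈ W ∧ ∀ x ∈ K, (Prod.fst : B × P → B) x = b → x ∈ Prod.snd ⁻¹' G} with hW''
  have hW''open : IsOpen W'' := fwc_isOpen_setOf hW hK (hGopen.preimage continuous_snd)
  refine ⟨(W'' ∩ ⋂ t ∈ s, U t) ×ˢ ⋂ t ∈ s, {g : C(P, Q) | Set.MapsTo g (N t) (V' t)},
    ?_, ?_, ?_⟩
  · -- the candidate open set is contained in the preimage
    rintro ⟨b, g⟩ ⟨⟨⟨hbW, hbint⟩, hbU'⟩, hgint⟩
    refine ⟨hbW, ?_⟩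
    rintro ⟨xb, xp⟩ hxK hx
    have hxG : xp ∈ G := hbint (xb, xp) hxK hx
    obtain ⟨t, hts, hxpt⟩ := Set.mem_iUnion₂.1 hxG
    have h1 : g xp ∈ V' t := (Set.mem_iInter₂.1 hgint t hts) (interior_subset hxpt)
    have h2 : b ∈ U t := Set.mem_iInter₂.1 hbU' t hts
    show (b, g xp) ∈ V
    exact hsub t (hsF t hts) (Set.mem_prod.2 ⟨h2, h1⟩)
  · exact ((hW''open.inter (isOpen_biInter_finset fun t ht =>
      hU t (hsF t ht))).prod (isOpen_biInter_finset fun t ht =>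
      ContinuousMap.isOpen_setOf_mapsTo (hNc t (hsF t ht)) (hV' t (hsF t ht))))
  · -- the point is in the candidate set
    refine ⟨⟨⟨hb₀W, ?_⟩, ?_⟩, ?_⟩
    · rintro ⟨xb, xp⟩ hxK hx
      have : (b₀, xp) ∈ K := by
        have hx' : xb = b₀ := hx
        rwa [← hx']
      exact hcover this
    · exact Set.mem_iInter₂.2 fun t ht => hbU t (hsF t ht)
    · exact Set.mem_iInter₂.2 fun t ht => hmap t (hsF t ht)

end Aux

/-- For trivial fibrewise spaces `B × P` and `B × Q` with `P` compact Hausdorff, the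
natural bijection `Map_B(B×P, B×Q) → B × C(P,Q)` is a homeomorphism (with `C(P,Q)`
carrying the compact-open topology). -/
theorem fibreMap_trivial_isHomeomorph
    {B P Q : Type} [TopologicalSpace B] [TopologicalSpace P] [TopologicalSpace Q]
    [CompactSpace P] [T2Space P]
    (Θ : FibreMap (Prod.fst : B × P → B) (Prod.fst : B × Q → B) → B × C(P, Q))
    (hΘbase : ∀ m, (Θ m).1 = m.base)
    (hΘmap : ∀ m (t : P), (Θ m).2 t = (m.map ⟨(m.base, t), rfl⟩).1.2) :
    IsHomeomorph Θ := by
  -- injectivity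
  have hinj : Function.Injective Θ := by
    rintro ⟨b, f⟩ ⟨b', f'⟩ h
    have hb : b = b' := by
      have h1 := hΘbase ⟨b, f⟩
      have h2 := hΘbase ⟨b', f'⟩
      rw [h] at h1
      exact h1.symm.trans h2
    subst hb
    have hmapeq : f = f' := by
      refine ContinuousMap.ext fun x => ?_
      obtain ⟨⟨xb, xp⟩, hx⟩ := x
      simp only at hx
      subst hx
      have hsnd : (↑(f ⟨(xb, xp), rfl⟩) : B × Q).2 = (↑(f' ⟨(xb, xp), rfl⟩) : B × Q).2 := by
        have h1 := hΘmap ⟨xb, f⟩ xp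
        have h2 := hΘmap ⟨xb, f'⟩ xp
        rw [h] at h1
        exact h1.symm.trans h2
      exact Subtype.ext (Prod.ext
        ((f ⟨(xb, xp), rfl⟩).prop.trans (f' ⟨(xb, xp), rfl⟩).prop.symm) hsnd)
    rw [hmapeq]
  -- right inverse
  have hright : ∀ z : B × C(P, Q), Θ (trivMapInv z) = z := by
    intro z
    apply Prod.ext
    · exact hΘbase (trivMapInv z)
    · ext t
      have := hΘmap (trivMapInv z) t
      rw [this]
      rfl
  have hleft : ∀ m, trivMapInv (Θ m) = m := fun m => hinj (hright (Θ m))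
  -- continuity of Θ
  have hcont : Continuous Θ := by
    have hΘeq : Θ = fun m => (m.base, (Θ m).2) :=
      funext fun m => Prod.ext (hΘbase m) rfl
    rw [hΘeq]
    apply Continuous.prodMk
    · -- continuity of base
      refine continuous_def.2 fun W hW => ?_
      have heq : (fun m : FibreMap (Prod.fst : B × P → B) (Prod.fst : B × Q → B) =>
            m.base) ⁻¹' W =
          {m : FibreMap (Prod.fst : B × P → B) (Prod.fst : B × Q → B) | m.base ∈ W ∧
            ∀ x : B × P, x ∈ (∅ : Set (B × P)) → ∀ hx : x.1 = m.base,
              ((m.map ⟨x, hx⟩ : B × Q)) ∈ (∅ : Set (B × Q))} := by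
        ext m
        simp
      rw [heq]
      exact TopologicalSpace.isOpen_generateFrom_of_mem
        ⟨W, ∅, ∅, hW, fwc_empty _ _, isOpen_empty, Set.empty_subset _, rfl⟩
    · -- continuity into C(P,Q)
      refine ContinuousMap.continuous_compactOpen.2 fun K hK U hU => ?_
      have heq : {m : FibreMap (Prod.fst : B × P → B) (Prod.fst : B × Q → B) |
            Set.MapsTo ((Θ m).2) K U} =
          {m : FibreMap (Prod.fst : B × P → B) (Prod.fst : B × Q → B) |
            m.base ∈ Set.univ ∧
            ∀ x : B × P, x ∈ Set.univ ×ˢ K → ∀ hx : x.1 = m.base,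
              ((m.map ⟨x, hx⟩ : B × Q)) ∈ Set.univ ×ˢ U} := by
        ext m
        constructor
        · intro hm
          refine ⟨trivial, ?_⟩
          rintro ⟨xb, xp⟩ hxmem hx
          have hxp : xp ∈ K := hxmem.2
          have hsub' : (⟨(xb, xp), hx⟩ : {x : B × P // x.1 = m.base}) =
              ⟨(m.base, xp), rfl⟩ := Subtype.ext (Prod.ext hx rfl)
          rw [hsub']
          refine Set.mem_prod.2 ⟨trivial, ?_⟩
          have h1 : (Θ m).2 xp ∈ U := hm hxp
          rw [hΘmap m xp] at h1
          exact h1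
        · intro hm t ht
          show (Θ m).2 t ∈ U
          rw [hΘmap m t]
          exact (Set.mem_prod.1 (hm.2 (m.base, t) (Set.mem_prod.2 ⟨trivial, ht⟩) rfl)).2
      show IsOpen {m : FibreMap (Prod.fst : B × P → B) (Prod.fst : B × Q → B) |
        Set.MapsTo ((Θ m).2) K U}
      rw [heq]
      exact TopologicalSpace.isOpen_generateFrom_of_mem
        ⟨Set.univ, Set.univ ×ˢ K, Set.univ ×ˢ U, isOpen_univ, fwc_univ_prod hK,
          isOpen_univ.prod hU, fun y _ => trivial, rfl⟩
  -- assemble the homeomorphism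
  let e : FibreMap (Prod.fst : B × P → B) (Prod.fst : B × Q → B) ≃ₜ B × C(P, Q) :=
    { toFun := Θ
      invFun := trivMapInv
      left_inv := hleft
      right_inv := hright
      continuous_toFun := hcont
      continuous_invFun := continuous_trivMapInv }
  exact e.isHomeomorph
end

section
/- Let B be a topological space, let X and Y be fibrewise compact, fibrewise Hausdorff spaces over B, and let C be a topological space. Regard X×C and Y×C as fibrewise spaces over B×C (with projections p×id_C and q×id_C), so that the fibre of X×C over (b,c) is X_b×{c}. Then the map Map_B(X,Y) × C → Map_{B×C}(X×C, Y×C), sending ((b,f), c) to ((b,c), f×id), where f×id : X_b×{c} → Y_b×{c} is (x,c) ↦ (f(x),c), is continuous. -/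
/-- `X` is fibrewise compact over `B`. -/
def FibrewiseCompact {X B : Type} [TopologicalSpace X] [TopologicalSpace B]
    (p : X → B) : Prop :=
  IsClosedMap p ∧ ∀ b : B, IsCompact (p ⁻¹' {b})

/-- `X` is fibrewise Hausdorff over `B`. -/
def FibrewiseT2 {X B : Type} [TopologicalSpace X] [TopologicalSpace B]
    (p : X → B) : Prop :=
  ∀ x y : X, x ≠ y → p x = p y →
    ∃ u v : Set X, IsOpen u ∧ IsOpen v ∧ x ∈ u ∧ y ∈ v ∧ Disjoint u v

/-- The map `Map_B(X,Y) × C → Map_{B×C}(X×C, Y×C)` sending `((b,f), c)` to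
`((b,c), f × id)`. -/
def fibreMapProd {B C X Y : Type} [TopologicalSpace X] [TopologicalSpace Y]
    [TopologicalSpace C] (p : X → B) (q : Y → B)
    (mc : FibreMap p q × C) :
    FibreMap (fun w : X × C => (p w.1, w.2)) (fun w : Y × C => (q w.1, w.2)) where
  base := (mc.1.base, mc.2)
  map :=
    { toFun := fun w =>
        ⟨(((mc.1.map ⟨w.1.1, congrArg Prod.fst w.2⟩ : {y : Y // q y = mc.1.base}) : Y),
            w.1.2),
          by
            have h1 : q ((mc.1.map ⟨w.1.1, congrArg Prod.fst w.2⟩ :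
                {y : Y // q y = mc.1.base}) : Y) = mc.1.base :=
              (mc.1.map ⟨w.1.1, congrArg Prod.fst w.2⟩).2
            have h2 : (w : X × C).2 = mc.2 := congrArg Prod.snd w.2
            exact Prod.ext_iff.mpr ⟨h1, h2⟩⟩
      continuous_toFun := by
        apply Continuous.subtype_mk
        apply Continuous.prodMk
        · exact continuous_subtype_val.comp
            (mc.1.map.continuous.comp
              (Continuous.subtype_mk (continuous_fst.comp continuous_subtype_val) _))
        · exact continuous_snd.comp continuous_subtype_val }

lemma fibrewiseCompactOn_empty' {B X : Type} [TopologicalSpace B] [TopologicalSpace X]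
    (p : X → B) (W : Set B) : FibrewiseCompactOn p (∅ : Set X) W := by
  refine ⟨fun x hx => absurd hx (Set.notMem_empty x), ?_, ?_⟩
  · intro s _
    have h : (fun k : (∅ : Set X) =>
        (⟨p k.1, absurd k.2 (Set.notMem_empty k.1)⟩ : W)) '' s = ∅ := by
      apply Set.eq_empty_iff_forall_notMem.mpr
      rintro w ⟨k, _, _⟩
      exact Set.notMem_empty k.1 k.2
    rw [h]; exact isClosed_empty
  · intro b _
    rw [Set.empty_inter]; exact isCompact_empty

lemma fibrewiseCompactOn_closed' {B X : Type} [TopologicalSpace B] [TopologicalSpace X]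
    {p : X → B} (hp : FibrewiseCompact p) {M : Set X} (hM : IsClosed M) :
    FibrewiseCompactOn p M Set.univ := by
  refine ⟨fun x _ => Set.mem_univ _, ?_, fun b _ => (hp.2 b).inter_left hM⟩
  intro s hs
  have himg : (fun k : M => (⟨p k.1, Set.mem_univ (p k.1)⟩ : (Set.univ : Set B))) '' s
      = Subtype.val ⁻¹' (p '' (Subtype.val '' s)) := by
    ext w
    constructor
    · rintro ⟨k, hk, rfl⟩
      exact ⟨k.1, ⟨k, hk, rfl⟩, rfl⟩
    · rintro ⟨x, ⟨k, hk, rfl⟩, hx⟩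
      exact ⟨k, hk, Subtype.ext hx⟩
  rw [himg]
  exact (hp.1 _ (hM.isClosedMap_subtype_val _ hs)).preimage continuous_subtype_val

lemma fibrewise_regular' {B X : Type} [TopologicalSpace B] [TopologicalSpace X]
    {p : X → B} (hc : FibrewiseCompact p) (hh : FibrewiseT2 p) {x : X} {O : Set X}
    (hO : IsOpen O) (hxO : x ∈ O) :
    ∃ N v : Set X, IsOpen N ∧ IsOpen v ∧ x ∈ N ∧ Disjoint N v ∧
      p ⁻¹' {p x} ⊆ O ∪ v := by
  set S : Set X := p ⁻¹' {p x} \ O with hS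
  have hScpt : IsCompact S := (hc.2 (p x)).diff hO
  have hsep : ∀ y : S, ∃ u v : Set X,
      IsOpen u ∧ IsOpen v ∧ x ∈ u ∧ y.1 ∈ v ∧ Disjoint u v := by
    rintro ⟨y, hy⟩
    have hyx : x ≠ y := fun h => hy.2 (h ▸ hxO)
    exact hh x y hyx hy.1.symm
  choose u v hu hv hxu hyv hdisj using hsep
  have hcover : S ⊆ ⋃ y : S, v y := fun z hz => Set.mem_iUnion.mpr ⟨⟨z, hz⟩, hyv _⟩
  obtain ⟨t, ht⟩ := hScpt.elim_finite_subcover v hv hcover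
  refine ⟨O ∩ ⋂ y ∈ t, u y, ⋃ y ∈ t, v y,
    hO.inter (isOpen_biInter_finset fun y _ => hu y),
    isOpen_biUnion fun y _ => hv y,
    ⟨hxO, Set.mem_biInter fun y _ => hxu y⟩, ?_, ?_⟩
  · rw [Set.disjoint_left]
    rintro z ⟨_, hz⟩ hzv
    obtain ⟨y, hyt, hzy⟩ := Set.mem_iUnion₂.mp hzv
    exact Set.disjoint_left.mp (hdisj y) (Set.mem_iInter₂.mp hz y hyt) hzy
  · intro z hz
    by_cases hzO : z ∈ O
    · exact Or.inl hzO
    · exact Or.inr (ht ⟨hz, hzO⟩)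


/-- For `X`, `Y` fibrewise compact Hausdorff over `B` and any space `C`, the natural map
`Map_B(X,Y) × C → Map_{B×C}(X×C, Y×C)`, `((b,f), c) ↦ ((b,c), f × id)`, is continuous. -/
theorem fibreMapProd_continuous
    {B C X Y : Type} [TopologicalSpace B] [TopologicalSpace C] [TopologicalSpace X]
    [TopologicalSpace Y]
    (p : X → B) (q : Y → B) (hp : Continuous p) (hq : Continuous q)
    (hXc : FibrewiseCompact p) (hXh : FibrewiseT2 p)
    (hYc : FibrewiseCompact q) (hYh : FibrewiseT2 q) :
    Continuous (fibreMapProd p q : FibreMap p q × C →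
      FibreMap (fun w : X × C => (p w.1, w.2)) (fun w : Y × C => (q w.1, w.2))) := by
  apply continuous_generateFrom_iff.mpr
  rintro s ⟨W', K', V', hW', hK', hV', hV'W, rfl⟩
  rw [isOpen_iff_forall_mem_open]
  rintro ⟨m₀, c₀⟩ hm₀
  obtain ⟨hbase, hmap⟩ := hm₀
  obtain ⟨hmem, hclosed, hcpt⟩ := hK'
  have hbase' : (m₀.base, c₀) ∈ W' := hbase
  set K₀ : Set (X × C) :=
    K' ∩ (fun w : X × C => (p w.1, w.2)) ⁻¹' {(m₀.base, c₀)} with hK₀def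
  have hK₀cpt : IsCompact K₀ := hcpt (m₀.base, c₀) hbase'
  -- choose data at each point of the fibre of K' over (b₀, c₀)
  have hchoice : ∀ i : K₀, ∃ (N v : Set X) (VY : Set Y) (CC : Set C),
      IsOpen N ∧ IsOpen v ∧ i.1.1 ∈ N ∧ Disjoint N v ∧ IsOpen VY ∧ IsOpen CC ∧
      c₀ ∈ CC ∧ VY ×ˢ CC ⊆ V' ∧
      ∀ z (hz : p z = m₀.base), z ∉ v → ((m₀.map ⟨z, hz⟩ : Y)) ∈ VY := by
    rintro ⟨⟨x, c⟩, hwK', hwfib⟩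
    have hfib : (p x, c) = (m₀.base, c₀) := hwfib
    have hx : p x = m₀.base := congrArg Prod.fst hfib
    have hc : c = c₀ := congrArg Prod.snd hfib
    have hval : (((m₀.map ⟨x, hx⟩ : {y : Y // q y = m₀.base}) : Y), c₀) ∈ V' := by
      rw [← hc]
      exact hmap (x, c) hwK' hfib
    obtain ⟨VY, CC, hVYo, hCCo, hyVY, hcCC, hVC⟩ :=
      isOpen_prod_iff.mp hV' _ c₀ hval
    have hcont : Continuous fun z : {z : X // p z = m₀.base} =>
        ((m₀.map z : {y : Y // q y = m₀.base}) : Y) :=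
      continuous_subtype_val.comp m₀.map.continuous
    obtain ⟨O, hOo, hOeq⟩ := isOpen_induced_iff.mp (hVYo.preimage hcont)
    have hxO : x ∈ O := by
      have hmem' : (⟨x, hx⟩ : {z : X // p z = m₀.base}) ∈ Subtype.val ⁻¹' O := by
        rw [show Subtype.val ⁻¹' O = _ from hOeq]
        exact hyVY
      exact hmem'
    obtain ⟨N, v, hNo, hvo, hxN, hNv, hNfib⟩ := fibrewise_regular' hXc hXh hOo hxO
    refine ⟨N, v, VY, CC, hNo, hvo, hxN, hNv, hVYo, hCCo, hcCC, hVC, ?_⟩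
    intro z hz hzv
    have hzfib : z ∈ p ⁻¹' {p x} := by
      simp only [Set.mem_preimage, Set.mem_singleton_iff, hz, hx]
    rcases hNfib hzfib with hzO | hzv'
    · have : (⟨z, hz⟩ : {z : X // p z = m₀.base}) ∈ Subtype.val ⁻¹' O := hzO
      rw [show Subtype.val ⁻¹' O = _ from hOeq] at this
      exact this
    · exact absurd hzv' hzv
  choose N v VY CC hNo hvo hmemN hdisj hVYo hCCo hc₀CC hsubV' hgood using hchoice
  -- finite subcover
  have hcov : K₀ ⊆ ⋃ i : K₀, (N i) ×ˢ (Set.univ : Set C) := fun w hw =>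
    Set.mem_iUnion.mpr ⟨⟨w, hw⟩, ⟨hmemN _, Set.mem_univ _⟩⟩
  obtain ⟨t, ht⟩ := hK₀cpt.elim_finite_subcover _
    (fun i => (hNo i).prod isOpen_univ) hcov
  set NN : Set X := ⋃ i ∈ t, N i with hNNdef
  have hNNo : IsOpen NN := isOpen_biUnion fun i _ => hNo i
  -- the tube: use closedness of the projection of K'
  have hSc : IsClosed ((fun k : K' => k.1.1) ⁻¹' NNᶜ) :=
    hNNo.isClosed_compl.preimage (continuous_fst.comp continuous_subtype_val)
  obtain ⟨F, hFeq, hFc⟩ : ∃ F : Set W',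
      F = (fun k : K' => (⟨(p k.1.1, k.1.2), hmem k.1 k.2⟩ : W')) ''
        ((fun k : K' => k.1.1) ⁻¹' NNᶜ) ∧ IsClosed F :=
    ⟨_, rfl, hclosed _ hSc⟩
  obtain ⟨G', hG'o, hG'eq⟩ := isOpen_induced_iff.mp hFc.isOpen_compl
  have hptF : (⟨(m₀.base, c₀), hbase'⟩ : W') ∉ F := by
    rw [hFeq]
    rintro ⟨k, hkS, hkeq⟩
    have hkeq' : (p k.1.1, k.1.2) = (m₀.base, c₀) := Subtype.ext_iff.mp hkeq
    have hkK₀ : k.1 ∈ K₀ := ⟨k.2, hkeq'⟩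
    obtain ⟨i, hit, hki⟩ := Set.mem_iUnion₂.mp (ht hkK₀)
    exact hkS (Set.mem_iUnion₂.mpr ⟨i, hit, hki.1⟩)
  have hptG' : (m₀.base, c₀) ∈ G' := by
    have h1 : (⟨(m₀.base, c₀), hbase'⟩ : W') ∈ Subtype.val ⁻¹' G' := by
      rw [show Subtype.val ⁻¹' G' = _ from hG'eq]
      exact hptF
    exact h1
  obtain ⟨W₁, C₁, hW₁o, hC₁o, hbW₁, hcC₁, hrect⟩ :=
    isOpen_prod_iff.mp (hG'o.inter hW') m₀.base c₀ ⟨hptG', hbase'⟩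
  have hGkey : ∀ (b : B) (c : C), b ∈ W₁ → c ∈ C₁ →
      ∀ w ∈ K', (p w.1, w.2) = (b, c) → w.1 ∈ NN := by
    intro b c hb hc w hwK' hweq
    by_contra hnot
    have hG : (p w.1, w.2) ∈ G' := by
      rw [hweq]
      exact (hrect ⟨hb, hc⟩).1
    have h1 : (⟨(p w.1, w.2), hmem w hwK'⟩ : W') ∈ Subtype.val ⁻¹' G' := hG
    rw [show Subtype.val ⁻¹' G' = _ from hG'eq] at h1
    apply h1
    rw [hFeq]
    exact ⟨⟨w, hwK'⟩, hnot, rfl⟩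
  -- the neighbourhood
  set P₁ : Set (FibreMap p q) := {m : FibreMap p q | m.base ∈ W₁ ∧
    ∀ (x : X), x ∈ (∅ : Set X) → ∀ hx : p x = m.base,
      ((m.map ⟨x, hx⟩ : Y)) ∈ (∅ : Set Y)} with hP₁def
  set P₂ : K₀ → Set (FibreMap p q) := fun i => {m : FibreMap p q |
    m.base ∈ (Set.univ : Set B) ∧
    ∀ (x : X), x ∈ (v i)ᶜ → ∀ hx : p x = m.base,
      ((m.map ⟨x, hx⟩ : Y)) ∈ VY i} with hP₂def
  have hP₁o : IsOpen P₁ :=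
    TopologicalSpace.isOpen_generateFrom_of_mem
      ⟨W₁, ∅, ∅, hW₁o, fibrewiseCompactOn_empty' p W₁, isOpen_empty,
        Set.empty_subset _, rfl⟩
  have hP₂o : ∀ i ∈ t, IsOpen (P₂ i) := fun i _ =>
    TopologicalSpace.isOpen_generateFrom_of_mem
      ⟨Set.univ, (v i)ᶜ, VY i, isOpen_univ,
        fibrewiseCompactOn_closed' hXc (hvo i).isClosed_compl, hVYo i,
        fun y _ => Set.mem_univ _, rfl⟩
  refine ⟨(P₁ ∩ ⋂ i ∈ t, P₂ i) ×ˢ (C₁ ∩ ⋂ i ∈ t, CC i), ?_, ?_, ?_⟩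
  · -- subset of the preimage
    rintro ⟨m, c⟩ ⟨⟨hmP₁, hmP₂⟩, hcC₁', hcCC'⟩
    refine ⟨(hrect ⟨hmP₁.1, hcC₁'⟩).2, ?_⟩
    intro w hwK' hweq
    have hweq' : (p w.1, w.2) = (m.base, c) := hweq
    have hw1 : w.1 ∈ NN := hGkey m.base c hmP₁.1 hcC₁' w hwK' hweq'
    obtain ⟨i, hit, hwNi⟩ := Set.mem_iUnion₂.mp hw1
    have hP2i := Set.mem_iInter₂.mp hmP₂ i hit
    have hx : p w.1 = m.base := congrArg Prod.fst hweq'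
    have h1 : ((m.map ⟨w.1, hx⟩ : Y)) ∈ VY i :=
      hP2i.2 w.1 (Set.disjoint_left.mp (hdisj i) hwNi) hx
    have h2 : w.2 ∈ CC i := by
      have hc2 : w.2 = c := congrArg Prod.snd hweq'
      rw [hc2]
      exact Set.mem_iInter₂.mp hcCC' i hit
    exact hsubV' i ⟨h1, h2⟩
  · exact (hP₁o.inter (isOpen_biInter_finset hP₂o)).prod
      (hC₁o.inter (isOpen_biInter_finset fun i _ => hCCo i))
  · exact ⟨⟨⟨hbW₁, fun x hx => absurd hx (Set.notMem_empty x)⟩,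
      Set.mem_iInter₂.mpr fun i _ =>
        ⟨Set.mem_univ _, fun z hz hpz => hgood i z hpz hz⟩⟩,
      hcC₁, Set.mem_iInter₂.mpr fun i _ => hc₀CC i⟩
end

section
/- Let A be a compact Hausdorff space, X a Hausdorff topological space, and e : A×[0,1) → X an open embedding (a homeomorphism onto an open subset of X). Define f : A → X by f(a) = e(a,0). Then for every topological space K the map f × id_K : A×K → X×K has the homotopy extension property; in particular (taking K a one-point space) f is a cofibration. -/
open unitInterval

/-- A continuous map `f : A → X` has the homotopy extension property. -/
def HEP {A X : Type} [TopologicalSpace A] [TopologicalSpace X] (f : A → X) : Prop :=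
  ∀ (Z : Type) (_ : TopologicalSpace Z) (g : X → Z), Continuous g →
    ∀ G : A × I → Z, Continuous G → (∀ a, G (a, 0) = g (f a)) →
      ∃ G' : X × I → Z, Continuous G' ∧ (∀ x, G' (x, 0) = g x) ∧
        ∀ a t, G' (f a, t) = G (a, t)

open Set

noncomputable def colS (s : ℝ) (t : I) : ℝ :=
  max 0 (min ((1 + 2*(2*s-1)/(2-(t:ℝ)))/2) (1/2))

noncomputable def colT (s : ℝ) (t : I) : ℝ :=
  ((t:ℝ) - 4*s)/(1 - min (2*s) (1/2))

lemma colS_cont : Continuous fun p : ℝ × I => colS p.1 p.2 := by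
  unfold colS
  apply continuous_const.max
  apply Continuous.min _ continuous_const
  apply Continuous.div_const
  apply continuous_const.add
  apply Continuous.div
  · fun_prop
  · fun_prop
  · intro p
    intro h; nlinarith [p.2.2.2]

lemma colT_cont : Continuous fun p : ℝ × I => colT p.1 p.2 := by
  unfold colT
  apply Continuous.div
  · fun_prop
  · fun_prop
  · intro p
    have : min (2*p.1) (1/2 : ℝ) ≤ 1/2 := min_le_right _ _
    intro h; nlinarith

lemma colS_mem (s : ℝ) (t : I) : colS s t ∈ Set.Ico (0:ℝ) 1 :=
  ⟨le_max_left _ _, by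
    have : min ((1 + 2*(2*s-1)/(2-(t:ℝ)))/2) (1/2) ≤ 1/2 := min_le_right _ _
    unfold colS
    rw [max_lt_iff]
    constructor <;> [norm_num; linarith]⟩

lemma colS_at_zero (s : ℝ) (hs : 0 ≤ s) (hs' : s ≤ 1/2) : colS s 0 = s := by
  unfold colS
  have h0 : ((0:I):ℝ) = 0 := rfl
  rw [h0]
  have : (1 + 2*(2*s-1)/(2-(0:ℝ)))/2 = s := by ring
  rw [this, min_eq_left hs', max_eq_right hs]

lemma colS_diag (s : ℝ) (t : I) (ht : (t:ℝ) = 4*s) : colS s t = 0 := by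
  unfold colS
  have ht1 : (t:ℝ) ≤ 1 := t.2.2
  have h24 : (2:ℝ) - (t:ℝ) ≥ 1 := by linarith
  have : (1 + 2*(2*s-1)/(2-(t:ℝ)))/2 = 0 := by
    rw [ht]
    have h : (2:ℝ) - 4*s ≠ 0 := by rw [ht] at h24; linarith
    rw [show 2*(2*s-1)/(2-4*s) = -1 by rw [div_eq_iff h]; ring]; norm_num
  rw [this]
  norm_num

lemma colS_half (t : I) : colS (1/2) t = 1/2 := by
  unfold colS
  norm_num

lemma colT_zero_s (t : I) : colT 0 t = (t:ℝ) := by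
  unfold colT; norm_num

lemma colT_diag (s : ℝ) (t : I) (ht : (t:ℝ) = 4*s) : colT s t = 0 := by
  unfold colT
  rw [ht]; ring_nf

lemma pasting {α β : Type*} [TopologicalSpace α] [TopologicalSpace β]
    {f : α → β} {s t : Set α} (hs : IsClosed s) (ht : IsClosed t)
    (hcov : s ∪ t = univ) (hfs : ContinuousOn f s) (hft : ContinuousOn f t) :
    Continuous f := by
  rw [continuous_iff_isClosed]
  intro C hC
  have : f ⁻¹' C = (s ∩ f ⁻¹' C) ∪ (t ∩ f ⁻¹' C) := by
    rw [← union_inter_distrib_right, hcov, univ_inter]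
  rw [this]
  exact (hfs.preimage_isClosed_of_isClosed hs hC).union
    (hft.preimage_isClosed_of_isClosed ht hC)

/-- Half-collar parameter space. -/
abbrev colQ : Type := ↥(Set.Icc (0:ℝ) (1/2))

lemma colQ_mem (s : colQ) : (s:ℝ) ∈ Set.Ico (0:ℝ) 1 :=
  ⟨s.2.1, lt_of_le_of_lt s.2.2 (by norm_num)⟩

section defs
variable {A X K Z : Type} [TopologicalSpace A] [TopologicalSpace X]
    [TopologicalSpace K] [TopologicalSpace Z]

/-- The half-collar embedding. -/
noncomputable def colE (e : A × ↥(Set.Ico (0:ℝ) 1) → X) (p : A × colQ) : X :=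
  e (p.1, ⟨(p.2:ℝ), colQ_mem p.2⟩)

/-- The map on the collar obtained by composing with the retraction of the square. -/
noncomputable def colG2 (e : A × ↥(Set.Ico (0:ℝ) 1) → X)
    (g : X × K → Z) (G : (A × K) × I → Z) (p : (A × colQ) × K × I) : Z :=
  if ((p.2.2:ℝ) ≤ 4 * ((p.1.2:colQ):ℝ)) then
    g (e (p.1.1, ⟨colS (p.1.2:ℝ) p.2.2, colS_mem _ _⟩), p.2.1)
  else
    G ((p.1.1, p.2.1), Set.projIcc 0 1 zero_le_one (colT (p.1.2:ℝ) p.2.2))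

variable {e : A × ↥(Set.Ico (0:ℝ) 1) → X} {f : A → X}
    {g : X × K → Z} {G : (A × K) × I → Z}

lemma colE_cont (hec : Continuous e) : Continuous (colE e (A := A) (X := X)) := by
  apply hec.comp
  apply Continuous.prodMk continuous_fst
  apply Continuous.subtype_mk
  fun_prop

lemma colG2_cont (hec : Continuous e)
    (hf : ∀ a, f a = e (a, ⟨0, le_refl 0, one_pos⟩))
    (hg : Continuous g) (hGc : Continuous G)
    (hG0 : ∀ w : A × K, G (w, 0) = g (f w.1, w.2)) :
    Continuous (colG2 e g G) := by
  unfold colG2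
  have hkey : frontier {p : (A × colQ) × K × I | ((p.2.2:I):ℝ) ≤ 4 * ((p.1.2:colQ):ℝ)}
      ⊆ {p | ((p.2.2:I):ℝ) = 4 * ((p.1.2:colQ):ℝ)} :=
    frontier_le_subset_eq (by fun_prop) (by fun_prop)
  apply Continuous.if
  · intro p hp
    have hfr : ((p.2.2:I):ℝ) = 4 * ((p.1.2:colQ):ℝ) := hkey hp
    have h1 : colS ((p.1.2:colQ):ℝ) p.2.2 = 0 := colS_diag _ _ hfr
    have h2 : colT ((p.1.2:colQ):ℝ) p.2.2 = 0 := colT_diag _ _ hfr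
    have h3 : (⟨colS ((p.1.2:colQ):ℝ) p.2.2, colS_mem _ _⟩ : ↥(Set.Ico (0:ℝ) 1))
        = ⟨0, le_refl 0, one_pos⟩ := Subtype.ext h1
    have h4 : Set.projIcc (0:ℝ) 1 zero_le_one (colT ((p.1.2:colQ):ℝ) p.2.2) = 0 := by
      rw [h2]; exact Set.projIcc_left _
    rw [h3, h4, hG0 (p.1.1, p.2.1), hf p.1.1]
  · have c0 : Continuous fun p : (A × colQ) × K × I => (((p.1.2:colQ):ℝ), p.2.2) :=
      Continuous.prodMk (continuous_subtype_val.comp (continuous_snd.comp continuous_fst))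
        (continuous_snd.comp continuous_snd)
    have c1 : Continuous fun p : (A × colQ) × K × I => colS ((p.1.2:colQ):ℝ) p.2.2 :=
      colS_cont.comp c0
    apply hg.comp
    refine Continuous.prodMk ?_ (continuous_fst.comp continuous_snd)
    apply hec.comp
    exact Continuous.prodMk (continuous_fst.comp continuous_fst) (c1.subtype_mk _)
  · have c0 : Continuous fun p : (A × colQ) × K × I => (((p.1.2:colQ):ℝ), p.2.2) :=
      Continuous.prodMk (continuous_subtype_val.comp (continuous_snd.comp continuous_fst))
        (continuous_snd.comp continuous_snd)
    have c2 : Continuous fun p : (A × colQ) × K × I => colT ((p.1.2:colQ):ℝ) p.2.2 :=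
      colT_cont.comp c0
    apply hGc.comp
    refine Continuous.prodMk ?_ (continuous_projIcc.comp c2)
    exact Continuous.prodMk (continuous_fst.comp continuous_fst) (continuous_fst.comp continuous_snd)

lemma colG2_zero (a : A) (s : colQ) (k : K) :
    colG2 e g G ((a,s),(k,0)) = g (colE e (a,s), k) := by
  have hc : (((0:I)):ℝ) ≤ 4 * (s:ℝ) := by
    have := s.2.1
    simp only [Icc.coe_zero]
    linarith
  unfold colG2 colE
  rw [if_pos hc]
  have h3 : (⟨colS (s:ℝ) 0, colS_mem _ _⟩ : ↥(Set.Ico (0:ℝ) 1))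
      = ⟨(s:ℝ), colQ_mem s⟩ := Subtype.ext (colS_at_zero _ s.2.1 s.2.2)
  rw [h3]

lemma colG2_left (hf : ∀ a, f a = e (a, ⟨0, le_refl 0, one_pos⟩))
    (hG0 : ∀ w : A × K, G (w, 0) = g (f w.1, w.2))
    (a : A) (k : K) (t : I) (h0 : (0:ℝ) ∈ Set.Icc (0:ℝ) (1/2)) :
    colG2 e g G ((a, ⟨0, h0⟩),(k,t)) = G ((a,k), t) := by
  by_cases hc : ((t:I):ℝ) ≤ 4 * (((⟨0, h0⟩:colQ)):ℝ)
  · have ht0 : t = 0 := by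
      have h1 := t.2.1
      apply Subtype.ext
      simp only at hc
      simp only [Icc.coe_zero] at hc ⊢
      linarith [hc]
    subst ht0
    rw [colG2_zero, hG0 (a, k)]
    unfold colE
    rw [hf a]
  · unfold colG2
    rw [if_neg hc]
    have h2 : colT ((⟨0, h0⟩:colQ):ℝ) t = (t:ℝ) := colT_zero_s t
    have h4 : Set.projIcc (0:ℝ) 1 zero_le_one (colT ((⟨0, h0⟩:colQ):ℝ) t) = t := by
      rw [h2, Set.projIcc_of_mem _ t.2]
    rw [h4]

lemma colG2_half (a : A) (k : K) (t : I) (hh : (1/2:ℝ) ∈ Set.Icc (0:ℝ) (1/2)) :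
    colG2 e g G ((a, ⟨1/2, hh⟩),(k,t)) = g (colE e (a, (⟨1/2, hh⟩ : colQ)), k) := by
  have hc : ((t:I):ℝ) ≤ 4 * (((⟨1/2, hh⟩:colQ)):ℝ) := by
    have := t.2.2
    simp only
    linarith
  unfold colG2 colE
  rw [if_pos hc]
  have h3 : (⟨colS (((⟨1/2, hh⟩:colQ)):ℝ) t, colS_mem _ _⟩ : ↥(Set.Ico (0:ℝ) 1))
      = ⟨(1/2 : ℝ), colQ_mem ⟨1/2, hh⟩⟩ := Subtype.ext (colS_half t)
  rw [h3]

end defs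

theorem hep_aux {A X K Z : Type} [TopologicalSpace A] [TopologicalSpace X]
    [TopologicalSpace K] [TopologicalSpace Z]
    [CompactSpace A] [T2Space X]
    (e : A × ↥(Set.Ico (0:ℝ) 1) → X) (he : Topology.IsOpenEmbedding e)
    (f : A → X) (hf : ∀ a, f a = e (a, ⟨0, le_refl 0, one_pos⟩))
    (g : X × K → Z) (hg : Continuous g)
    (G : (A × K) × I → Z) (hGc : Continuous G)
    (hG0 : ∀ w : A × K, G (w, 0) = g (f w.1, w.2)) :
    ∃ G' : (X × K) × I → Z, Continuous G' ∧ (∀ xk, G' (xk, 0) = g xk) ∧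
      ∀ (w : A × K) (t : I), G' ((f w.1, w.2), t) = G (w, t) := by
  classical
  have hEc : Continuous (colE e (A := A) (X := X)) := colE_cont he.continuous
  have hEinj : Function.Injective (colE e (A := A) (X := X)) := by
    intro p q h
    have h2 := he.injective h
    have h3 := congrArg Prod.fst h2
    have h4 := congrArg (fun r : A × ↥(Set.Ico (0:ℝ) 1) => (r.2 : ℝ)) h2
    exact Prod.ext h3 (Subtype.ext h4)
  have hEcl : Topology.IsClosedEmbedding (colE e) := hEc.isClosedEmbedding hEinj
  have hfE : ∀ a, f a = colE e (a, ⟨0, by norm_num⟩) := fun a => hf a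
  have hG2c : Continuous (colG2 e g G) := colG2_cont he.continuous hf hg hGc hG0
  -- the open half-collar
  set O : Set X := e '' (univ ×ˢ {u : ↥(Set.Ico (0:ℝ) 1) | (u:ℝ) < 1/2}) with hO
  have hOopen : IsOpen O := he.isOpenMap _
    (isOpen_univ.prod (isOpen_lt continuous_subtype_val continuous_const))
  have hOsub : O ⊆ Set.range (colE e) := by
    rintro x ⟨⟨a, u⟩, ⟨-, hu⟩, rfl⟩
    exact ⟨(a, ⟨(u:ℝ), ⟨u.2.1, le_of_lt hu⟩⟩), rfl⟩
  have hmemO : ∀ (a : A) (s : colQ), colE e (a,s) ∈ O → (s:ℝ) < 1/2 := by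
    rintro a s ⟨⟨b, u⟩, ⟨-, hu⟩, hx⟩
    have h2 := he.injective hx
    have h4 := congrArg (fun r : A × ↥(Set.Ico (0:ℝ) 1) => (r.2 : ℝ)) h2
    simp only at h4
    change (u:ℝ) < 1/2 at hu
    rwa [h4] at hu
  -- the extension
  set G' : (X × K) × I → Z := fun p =>
    if h : p.1.1 ∈ Set.range (colE e) then colG2 e g G (h.choose, (p.1.2, p.2)) else g p.1
    with hG'
  have hchoose : ∀ (x : X) (h : x ∈ Set.range (colE e)) (q : A × colQ),
      colE e q = x → h.choose = q :=
    fun x h q hq => hEinj (h.choose_spec.trans hq.symm)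
  -- continuity
  set S : Set ((X × K) × I) := {p | p.1.1 ∈ Set.range (colE e)} with hS
  have hSclosed : IsClosed S :=
    hEcl.isClosed_range.preimage (continuous_fst.comp continuous_fst)
  set S' : Set ((X × K) × I) := {p | p.1.1 ∉ O} with hS'
  have hS'closed : IsClosed S' :=
    (hOopen.preimage (continuous_fst.comp continuous_fst)).isClosed_compl
  have hcov : S ∪ S' = univ := by
    ext p
    simp only [mem_union, mem_univ, iff_true, hS, hS', mem_setOf_eq]
    by_cases h : p.1.1 ∈ O
    · exact Or.inl (hOsub h)
    · exact Or.inr h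
  set H := hEcl.isEmbedding.toHomeomorph with hH
  have hcontS : ContinuousOn G' S := by
    rw [continuousOn_iff_continuous_restrict]
    have heq : S.domRestrict G' = fun p : S =>
        colG2 e g G (H.symm ⟨(p : (X × K) × I).1.1, p.2⟩,
          ((p : (X × K) × I).1.2, (p : (X × K) × I).2)) := by
      funext p
      have hp : (p : (X × K) × I).1.1 ∈ Set.range (colE e) := p.2
      simp only [domRestrict_apply, hG', dif_pos hp]
      congr 1
      have hee : colE e (H.symm ⟨(p : (X × K) × I).1.1, p.2⟩) = (p : (X × K) × I).1.1 := by
        have := H.apply_symm_apply ⟨(p : (X × K) × I).1.1, p.2⟩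
        exact congrArg Subtype.val this
      rw [hchoose _ hp _ hee]
    rw [heq]
    apply hG2c.comp
    refine Continuous.prodMk ?_ ?_
    · apply H.symm.continuous.comp
      apply Continuous.subtype_mk
      exact (continuous_fst.comp continuous_fst).comp continuous_subtype_val
    · exact Continuous.prodMk
        ((continuous_snd.comp continuous_fst).comp continuous_subtype_val)
        (continuous_snd.comp continuous_subtype_val)
  have hcontS' : ContinuousOn G' S' := by
    apply ContinuousOn.congr ((hg.comp continuous_fst).continuousOn (s := S'))
    intro p hp
    by_cases h : p.1.1 ∈ Set.range (colE e)
    · obtain ⟨q, hq⟩ := h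
      have hs2 : (q.2 : ℝ) = 1/2 := by
        rcases lt_or_ge (q.2 : ℝ) (1/2) with hlt | hge
        · exfalso
          apply hp
          rw [← hq]
          show colE e q ∈ O
          exact ⟨(q.1, ⟨(q.2:ℝ), colQ_mem q.2⟩), ⟨mem_univ _, hlt⟩, rfl⟩
        · exact le_antisymm q.2.2.2 hge
      have hq2 : q.2 = (⟨1/2, by norm_num⟩ : colQ) := Subtype.ext hs2
      have hmem : p.1.1 ∈ Set.range (colE e) := ⟨q, hq⟩
      simp only [hG', dif_pos hmem]
      rw [hchoose _ hmem q hq]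
      have hqe : q = (q.1, (⟨1/2, by norm_num⟩ : colQ)) := by
        rw [← hq2]
      rw [hqe, colG2_half q.1 p.1.2 p.2]
      rw [← hqe, hq]
      rfl
    · simp only [hG', dif_neg h]
      rfl
  have hG'cont : Continuous G' := pasting hSclosed hS'closed hcov hcontS hcontS'
  refine ⟨G', hG'cont, ?_, ?_⟩
  · rintro ⟨x, k⟩
    by_cases h : x ∈ Set.range (colE e)
    · simp only [hG', dif_pos h]
      have hv := colG2_zero (e := e) (g := g) (G := G) h.choose.1 h.choose.2 k
      rw [show h.choose = (h.choose.1, h.choose.2) from rfl] at hv ⊢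
      rw [hv]
      rw [show (h.choose.1, h.choose.2) = h.choose from rfl, h.choose_spec]
    · simp only [hG', dif_neg h]
  · intro w t
    have h : f w.1 ∈ Set.range (colE e) := ⟨(w.1, ⟨0, by norm_num⟩), (hfE w.1).symm⟩
    simp only [hG', dif_pos h]
    rw [hchoose _ h (w.1, ⟨0, by norm_num⟩) (hfE w.1).symm]
    rw [colG2_left hf hG0 w.1 w.2 t]

/-- If `A` is compact Hausdorff, `X` is Hausdorff and `e : A × [0,1) → X` is an open
embedding, then `f := e(·, 0) : A → X` is such that `f × id_K : A × K → X × K` has the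
homotopy extension property for every space `K`; in particular `f` is a cofibration. -/
theorem hep_of_collar
    {A X : Type} [TopologicalSpace A] [TopologicalSpace X]
    [CompactSpace A] [T2Space A] [T2Space X]
    (e : A × ↥(Set.Ico (0 : ℝ) 1) → X) (he : Topology.IsOpenEmbedding e)
    (f : A → X) (hf : ∀ a, f a = e (a, ⟨0, le_refl 0, one_pos⟩)) :
    (∀ (K : Type) (_ : TopologicalSpace K), HEP (fun w : A × K => (f w.1, w.2))) ∧
      HEP f := by
  constructor
  · intro K _ Z _ g hg G hG hG0
    exact hep_aux e he f hf g hg G hG hG0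
  · intro Z _ g hg G hG hG0
    obtain ⟨G1, hc, h0, hext⟩ := hep_aux (K := Unit) e he f hf
      (fun p => g p.1) (hg.comp continuous_fst)
      (fun p => G (p.1.1, p.2)) (hG.comp (by fun_prop))
      (fun w => hG0 w.1)
    exact ⟨fun p => G1 ((p.1, ()), p.2), hc.comp (by fun_prop),
      fun x => h0 (x, ()), fun a t => hext (a, ()) t⟩
end
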